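/- Heine–Borel for the formal reals implies spatiality: if every open cover of [0,1] by rational open intervals has a finite subcover, and finite covers in the pointwise and pointfree topologies on the formal reals coincide, then for all (p,q) and U, (p,q) ◁_{R,Ip} U implies (p,q) ◁_R U. -/
import Mathlib


/-- The inductively generated cover of the formal topology of real numbers, on
the base `S = {(p,q) ∈ ℚ × ℚ | p < q}`. -/
inductive RCov : ℚ × ℚ → Set (ℚ × ℚ) → Prop
  | refl {a : ℚ × ℚ} {U : Set (ℚ × ℚ)} : a ∈ U → RCov a U
  | le {p q p' q' : ℚ} {U : Set (ℚ × ℚ)} :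
      p' ≤ p → q ≤ q' → RCov (p', q') U → RCov (p, q) U
  | wi {p q : ℚ} {U : Set (ℚ × ℚ)} :
      (∀ p' q' : ℚ, p < p' → p' < q' → q' < q → RCov (p', q') U) → RCov (p, q) U
  | split {p q p' q' : ℚ} {U : Set (ℚ × ℚ)} :
      p < p' → p' < q' → q' < q → RCov (p, q') U → RCov (p', q) U → RCov (p, q) U

theorem RCov.mono {a : ℚ × ℚ} {U V : Set (ℚ × ℚ)} (h : RCov a U) (hUV : U ⊆ V) :
    RCov a V := by
  induction h with
  | refl h => exact RCov.refl (hUV h)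
  | le h1 h2 _ ih => exact RCov.le h1 h2 (ih hUV)
  | wi _ ih => exact RCov.wi fun p' q' h1 h2 h3 => ih p' q' h1 h2 h3 hUV
  | split h1 h2 h3 _ _ ih1 ih2 => exact RCov.split h1 h2 h3 (ih1 hUV) (ih2 hUV)

/-- Heine–Borel for the formal reals, together with the coincidence of finite
pointwise and pointfree covers, implies spatiality of the formal reals. -/
theorem heineBorel_implies_spatiality
    -- Heine–Borel: every open cover of a compact rational interval by rational
    -- open intervals has a finite subcover.
    (HB : ∀ (p' q' : ℚ) (W : Set (ℚ × ℚ)),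
      (∀ x : ℝ, (p' : ℝ) ≤ x → x ≤ (q' : ℝ) →
        ∃ r ∈ W, (r.1 : ℝ) < x ∧ x < (r.2 : ℝ)) →
      ∃ V ⊆ W, V.Finite ∧ ∀ x : ℝ, (p' : ℝ) ≤ x → x ≤ (q' : ℝ) →
        ∃ r ∈ V, (r.1 : ℝ) < x ∧ x < (r.2 : ℝ))
    -- Finite pointwise and pointfree covers coincide.
    (hfin : ∀ (p' q' : ℚ) (V : Set (ℚ × ℚ)), V.Finite → p' < q' →
      ((∀ x : ℝ, (p' : ℝ) < x → x < (q' : ℝ) →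
        ∃ r ∈ V, (r.1 : ℝ) < x ∧ x < (r.2 : ℝ)) ↔ RCov (p', q') V)) :
    ∀ (p q : ℚ) (U : Set (ℚ × ℚ)), p < q → (∀ r ∈ U, r.1 < r.2) →
      (∀ x : ℝ, (p : ℝ) < x → x < (q : ℝ) →
        ∃ r ∈ U, (r.1 : ℝ) < x ∧ x < (r.2 : ℝ)) →
      RCov (p, q) U := by
  intro p q U hpq hU hcov
  apply RCov.wi
  intro p' q' hp hpq' hq
  obtain ⟨V, hVU, hVfin, hVcov⟩ := HB p' q' U (fun x hx1 hx2 =>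
    hcov x (lt_of_lt_of_le (by exact_mod_cast hp) hx1)
      (lt_of_le_of_lt hx2 (by exact_mod_cast hq)))
  have := (hfin p' q' V hVfin hpq').mp (fun x hx1 hx2 => hVcov x hx1.le hx2.le)
  exact this.mono hVU
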